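/- arXiv:2409.05788 — 3 statements merged into one kernel-verified Lean document; each statement's English description precedes it below -/
import Mathlib

section
/- Let n, k be positive integers and let y : Fin k → ℕ satisfy ∑_{r} y_r = n. Then, as an identity of polynomials in one variable q (equivalently, for every element q of a commutative ring), (∑_{w word with content y} q^{inv(w)}) · ∏_{r=1}^{k} ∏_{j=1}^{y_r} (1 − q^j) = ∏_{j=1}^{n} (1 − q^j). In other words, the generating polynomial ∑_{i ≥ 0} inv(y; i) q^i for words with content y counted by number of inversions equals the Gaussian (q-)multinomial coefficient [n; y_1, …, y_k]_q. -/
/-- The number of inversions of a word `w : Fin n → Fin k`: pairs of positions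
`s < t` with `w s > w t`. -/
def inversions {n k : ℕ} (w : Fin n → Fin k) : ℕ :=
  (Finset.univ.filter (fun st : Fin n × Fin n => st.1 < st.2 ∧ w st.2 < w st.1)).card

/-- The content of a word `w : Fin n → Fin k`: `content w r` is the number of
positions `t` with `w t = r`. -/
def content {n k : ℕ} (w : Fin n → Fin k) : Fin k → ℕ :=
  fun r => (Finset.univ.filter (fun t => w t = r)).card

lemma content_snoc {n k : ℕ} (w : Fin n → Fin k) (r s : Fin k) :
    content (Fin.snoc w r) s = content w s + if r = s then 1 else 0 := by
  unfold content
  rw [Finset.card_filter, Finset.card_filter, Fin.sum_univ_castSucc]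
  simp [Fin.snoc_castSucc, Fin.snoc_last]

lemma card_gt {n k : ℕ} (w : Fin n → Fin k) (r : Fin k) :
    (Finset.univ.filter (fun t => r < w t)).card
      = ∑ s ∈ Finset.univ.filter (fun s => r < s), content w s := by
  classical
  rw [Finset.card_filter]
  unfold content
  simp only [Finset.card_filter, Finset.sum_filter]
  calc (∑ t : Fin n, if r < w t then 1 else 0)
      = ∑ t : Fin n, ∑ a : Fin k, if w t = a ∧ r < a then 1 else 0 := by
        refine Finset.sum_congr rfl fun t _ => ?_
        rw [Finset.sum_eq_single (w t)]
        · simp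
        · intro s _ hs; simp [Ne.symm hs]
        · simp
    _ = ∑ a : Fin k, ∑ t : Fin n, if w t = a ∧ r < a then 1 else 0 := Finset.sum_comm
    _ = ∑ a : Fin k, if r < a then ∑ t : Fin n, if w t = a then 1 else 0 else 0 := by
        refine Finset.sum_congr rfl fun a _ => ?_
        by_cases h : r < a <;> simp [h]

lemma inversions_snoc {n k : ℕ} (w : Fin n → Fin k) (r : Fin k) :
    inversions (Fin.snoc w r)
      = inversions w + (Finset.univ.filter (fun t => r < w t)).card := by
  unfold inversions
  simp only [Finset.card_filter, Fintype.sum_prod_type, Fin.sum_univ_castSucc,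
    Fin.snoc_castSucc, Fin.snoc_last, Fin.castSucc_lt_castSucc_iff,
    Fin.castSucc_lt_last, true_and, lt_irrefl, false_and, if_false, add_zero]
  rw [Finset.sum_add_distrib]
  have hz : (∑ x : Fin n, if Fin.last n < x.castSucc ∧ w x < r then 1 else 0) = 0 :=
    Finset.sum_eq_zero fun t _ => by simp [(Fin.castSucc_lt_last t).asymm]
  rw [hz, add_zero]

lemma main_lemma {R : Type*} [CommRing R] (q : R) (k : ℕ) (n : ℕ) :
    ∀ (y : Fin k → ℕ), ∑ r, y r = n →
    (∑ w ∈ Finset.univ.filter (fun w : Fin n → Fin k => content w = y),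
        q ^ inversions w) *
      ∏ r : Fin k, ∏ j ∈ Finset.Icc 1 (y r), (1 - q ^ j) =
    ∏ j ∈ Finset.Icc 1 n, (1 - q ^ j) := by
  induction n with
  | zero =>
    intro y hy
    have hy0 : ∀ r, y r = 0 := fun r =>
      (Finset.sum_eq_zero_iff.mp hy) r (Finset.mem_univ r)
    have hc : ∀ w : Fin 0 → Fin k, content w = y := by
      intro w; funext r; simp [content, hy0 r]
    have hfilter : (Finset.univ.filter (fun w : Fin 0 → Fin k => content w = y))
        = Finset.univ := Finset.filter_true_of_mem (fun w _ => hc w)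
    rw [hfilter]
    have hinv : ∀ w : Fin 0 → Fin k, inversions w = 0 := by
      intro w; simp [inversions]
    simp [hinv, hy0]
  | succ n ih =>
    intro y hy
    classical
    set A : Fin k → ℕ := fun r => ∑ s ∈ Finset.univ.filter (fun s => r < s), y s with hA
    -- step 1: fiberwise decomposition by last letter
    rw [← Finset.sum_fiberwise
      (Finset.univ.filter (fun w : Fin (n+1) → Fin k => content w = y))
      (fun w => w (Fin.last n)) (fun w => q ^ inversions w)]
    rw [Finset.sum_mul]
    -- step 2: per-fiber evaluation
    have key : ∀ r : Fin k,
        (∑ w ∈ (Finset.univ.filter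
            (fun w : Fin (n+1) → Fin k => content w = y)).filter
            (fun w => w (Fin.last n) = r), q ^ inversions w) *
          ∏ s : Fin k, ∏ j ∈ Finset.Icc 1 (y s), (1 - q ^ j)
        = (q ^ A r * (1 - q ^ y r)) * ∏ j ∈ Finset.Icc 1 n, (1 - q ^ j) := by
      intro r
      rcases Nat.eq_zero_or_pos (y r) with h0 | hpos
      · -- empty fiber
        have hempty : ((Finset.univ.filter
            (fun w : Fin (n+1) → Fin k => content w = y)).filter
            (fun w => w (Fin.last n) = r)) = ∅ := by
          rw [Finset.eq_empty_iff_forall_notMem]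
          intro w hw
          simp only [Finset.mem_filter, Finset.mem_univ, true_and] at hw
          obtain ⟨hcw, hlast⟩ := hw
          have : 0 < content w r := by
            rw [content, Finset.card_pos]
            exact ⟨Fin.last n, by simp [hlast]⟩
          rw [hcw] at this; omega
        rw [hempty]
        simp [h0]
      · obtain ⟨m, hm⟩ : ∃ m, y r = m + 1 := ⟨y r - 1, by omega⟩
        set y' : Fin k → ℕ := Function.update y r m with hy'
        -- bijection with words of length n and content y'
        have hbij : (∑ w ∈ (Finset.univ.filter
            (fun w : Fin (n+1) → Fin k => content w = y)).filter
            (fun w => w (Fin.last n) = r), q ^ inversions w)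
            = ∑ w' ∈ Finset.univ.filter
              (fun w' : Fin n → Fin k => content w' = y'),
              q ^ (inversions w' + A r) := by
          refine Finset.sum_bij' (fun w _ => Fin.init w) (fun w' _ => Fin.snoc w' r)
            ?_ ?_ ?_ ?_ ?_
          · intro w hw
            simp only [Finset.mem_filter, Finset.mem_univ, true_and] at hw ⊢
            obtain ⟨hcw, hlast⟩ := hw
            funext s
            have hwsnoc : w = Fin.snoc (Fin.init w) r := by
              rw [← hlast]; exact (Fin.snoc_init_self w).symm
            have := content_snoc (Fin.init w) r s
            rw [← hwsnoc, hcw] at this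
            by_cases hsr : s = r
            · subst hsr
              rw [if_pos rfl] at this
              simp only [hy', Function.update_self]
              omega
            · simp only [if_neg (Ne.symm hsr), add_zero] at this
              simp [hy', Function.update_of_ne hsr, this]
          · intro w' hw'
            simp only [Finset.mem_filter, Finset.mem_univ, true_and] at hw' ⊢
            constructor
            · funext s
              rw [content_snoc, hw']
              by_cases hsr : s = r
              · subst hsr
                simp [hy', Function.update_self, hm]
              · simp [hy', Function.update_of_ne hsr, Ne.symm hsr]
            · simp [Fin.snoc_last]
          · intro w hw
            simp only [Finset.mem_filter, Finset.mem_univ, true_and] at hw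
            have := Fin.snoc_init_self w
            rw [hw.2] at this
            exact this
          · intro w' _
            simp
          · intro w hw
            simp only [Finset.mem_filter, Finset.mem_univ, true_and] at hw
            obtain ⟨hcw, hlast⟩ := hw
            have hwsnoc : w = Fin.snoc (Fin.init w) r := by
              have := Fin.snoc_init_self w
              rw [hlast] at this
              exact this.symm
            congr 1
            conv_lhs => rw [hwsnoc]
            rw [inversions_snoc, card_gt]
            congr 1
            simp only [hA]
            refine Finset.sum_congr rfl fun s hs => ?_
            have hrs : r < s := (Finset.mem_filter.mp hs).2
            have h2 := content_snoc (Fin.init w) r s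
            rw [← hwsnoc, if_neg (ne_of_lt hrs), add_zero] at h2
            rw [← h2]
            exact congrFun hcw s
        rw [hbij]
        simp_rw [pow_add]
        rw [← Finset.sum_mul]
        -- now use IH with y'
        have hy'sum : ∑ s, y' s = n := by
          rw [hy', Finset.sum_update_of_mem (Finset.mem_univ r)]
          rw [← Finset.add_sum_erase _ y (Finset.mem_univ r), Finset.erase_eq] at hy
          omega
        have hih := ih y' hy'sum
        -- product decomposition
        have hP : (∏ s : Fin k, ∏ j ∈ Finset.Icc 1 (y s), (1 - q ^ j))
            = (1 - q ^ y r) * ∏ s : Fin k, ∏ j ∈ Finset.Icc 1 (y' s), (1 - q ^ j) := by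
          rw [← Finset.mul_prod_erase Finset.univ _ (Finset.mem_univ r),
            ← Finset.mul_prod_erase Finset.univ
              (fun s => ∏ j ∈ Finset.Icc 1 (y' s), (1 - q ^ j)) (Finset.mem_univ r)]
          have h1 : ∏ j ∈ Finset.Icc 1 (y r), (1 - q ^ j)
              = (∏ j ∈ Finset.Icc 1 (y' r), (1 - q ^ j)) * (1 - q ^ y r) := by
            have hy'r : y' r = m := by rw [hy']; simp
            rw [hm, Finset.prod_Icc_succ_top (Nat.le_add_left 1 m), hy'r]
          have h2 : ∀ s ∈ Finset.univ.erase r,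
              (∏ j ∈ Finset.Icc 1 (y s), (1 - q ^ j))
                = ∏ j ∈ Finset.Icc 1 (y' s), (1 - q ^ j) := by
            intro s hs
            rw [hy', Function.update_of_ne (Finset.mem_erase.mp hs).1]
          rw [Finset.prod_congr rfl h2, h1]
          ring
        rw [hP]
        calc (∑ w' ∈ Finset.univ.filter (fun w' : Fin n → Fin k => content w' = y'),
                q ^ inversions w') * q ^ A r *
              ((1 - q ^ y r) * ∏ s : Fin k, ∏ j ∈ Finset.Icc 1 (y' s), (1 - q ^ j))
            = (q ^ A r * (1 - q ^ y r)) *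
              ((∑ w' ∈ Finset.univ.filter (fun w' : Fin n → Fin k => content w' = y'),
                q ^ inversions w') * ∏ s : Fin k, ∏ j ∈ Finset.Icc 1 (y' s), (1 - q ^ j)) := by
              ring
          _ = (q ^ A r * (1 - q ^ y r)) * ∏ j ∈ Finset.Icc 1 n, (1 - q ^ j) := by rw [hih]
    rw [Finset.sum_congr rfl fun r _ => key r]
    rw [← Finset.sum_mul]
    -- step 3: telescoping
    have tel : (∑ r : Fin k, q ^ A r * (1 - q ^ y r)) = 1 - q ^ (n + 1) := by
      set g : ℕ → R := fun i =>
        q ^ ∑ s ∈ Finset.univ.filter (fun s : Fin k => i ≤ (s : ℕ)), y s with hg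
      have h1 : ∀ r : Fin k, q ^ A r * (1 - q ^ y r) = g ((r : ℕ) + 1) - g (r : ℕ) := by
        intro r
        have hfilt1 : (Finset.univ.filter (fun s : Fin k => (r : ℕ) + 1 ≤ (s : ℕ)))
            = Finset.univ.filter (fun s => r < s) := by
          ext s
          simp only [Finset.mem_filter, Finset.mem_univ, true_and, Fin.lt_def]
          omega
        have hfilt2 : (Finset.univ.filter (fun s : Fin k => (r : ℕ) ≤ (s : ℕ)))
            = insert r (Finset.univ.filter (fun s => r < s)) := by
          ext s
          simp only [Finset.mem_filter, Finset.mem_univ, true_and, Finset.mem_insert]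
          rw [Fin.lt_def]
          constructor
          · intro h
            rcases Nat.eq_or_lt_of_le h with h' | h'
            · left; exact Fin.ext h'.symm
            · right; exact h'
          · rintro (rfl | h)
            · exact le_refl _
            · omega
        have hnotmem : r ∉ Finset.univ.filter (fun s => r < s) := by simp
        simp only [hg]
        rw [hfilt1, hfilt2, Finset.sum_insert hnotmem]
        have hAr : (∑ s ∈ Finset.univ.filter (fun s => r < s), y s) = A r := rfl
        rw [hAr, pow_add]
        ring
      rw [Finset.sum_congr rfl fun r _ => h1 r]
      rw [Fin.sum_univ_eq_sum_range (fun i => g (i + 1) - g i) k]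
      rw [Finset.sum_range_sub g k]
      have hgk : g k = 1 := by
        rw [hg]; simp only
        rw [Finset.filter_false_of_mem (fun s _ => by omega), Finset.sum_empty, pow_zero]
      have hg0 : g 0 = q ^ (n + 1) := by
        rw [hg]; simp only
        rw [Finset.filter_true_of_mem (fun s _ => Nat.zero_le _), hy]
      rw [hgk, hg0]
    rw [tel]
    rw [Finset.prod_Icc_succ_top (by omega : 1 ≤ n + 1)]
    ring

/-- The inversion generating polynomial for words with content `y` equals the
Gaussian multinomial coefficient `[n; y_1, …, y_k]_q`, as an identity of
polynomials, i.e. for every element `q` of any commutative ring: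
`(∑_{w : content w = y} q^{inv w}) ⋅ ∏_r ∏_{j=1}^{y_r} (1 - q^j) = ∏_{j=1}^n (1 - q^j)`. -/
theorem inv_gen_poly_eq_q_multinomial (n k : ℕ) (hn : 0 < n) (hk : 0 < k)
    (y : Fin k → ℕ) (hy : ∑ r, y r = n)
    (R : Type*) [CommRing R] (q : R) :
    (∑ w ∈ Finset.univ.filter (fun w : Fin n → Fin k => content w = y),
        q ^ inversions w) *
      ∏ r : Fin k, ∏ j ∈ Finset.Icc 1 (y r), (1 - q ^ j) =
    ∏ j ∈ Finset.Icc 1 n, (1 - q ^ j) := by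
  exact main_lemma q k n y hy
end

section
/- Let k be a positive integer and let y : Fin k → ℕ be fixed nonnegative integers with n = ∑_r y_r. Then ∑_{i ≥ 0} i · inv(y_1, …, y_k; i) = (1/2) · (n! / (y_1! y_2! ⋯ y_k!)) · ∑_{1 ≤ r < s ≤ k} y_r y_s. Equivalently, the sum of inv(w) over all words w with content y equals (1/2) times the multinomial coefficient times ∑_{r<s} y_r y_s. -/
/-- `invCount n k y i` is the number of words `w : Fin n → Fin k` with content `y`
and exactly `i` inversions. -/
def invCount (n k : ℕ) (y : Fin k → ℕ) (i : ℕ) : ℕ :=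
  (Finset.univ.filter
    (fun w : Fin n → Fin k => content w = y ∧ inversions w = i)).card

namespace InvAux

open Finset Nat

/-- Pairs of positions in increasing order with `w` increasing. -/
def antiInv {n k : ℕ} (w : Fin n → Fin k) : ℕ :=
  (Finset.univ.filter (fun st : Fin n × Fin n => st.1 < st.2 ∧ w st.1 < w st.2)).card

lemma content_comp_equiv {n k : ℕ} (w : Fin n → Fin k) (e : Equiv.Perm (Fin n)) (r : Fin k) :
    (univ.filter (fun t => w (e t) = r)).card = (univ.filter (fun t => w t = r)).card :=
  Finset.card_nbij' e e.symm (fun t ht => by simpa using ht) (fun t ht => by simpa using ht)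
    (fun t _ => by simp) (fun t _ => by simp)

lemma cardA {n k : ℕ} (w : Fin n → Fin k) :
    (univ.filter (fun st : Fin n × Fin n => w st.1 < w st.2)).card
      = ∑ rs ∈ univ.filter (fun rs : Fin k × Fin k => rs.1 < rs.2),
          content w rs.1 * content w rs.2 := by
  rw [Finset.card_eq_sum_card_fiberwise
    (f := fun st : Fin n × Fin n => (w st.1, w st.2))
    (t := univ.filter (fun rs : Fin k × Fin k => rs.1 < rs.2))
    (by intro st hst; simp only [Finset.mem_coe, mem_filter, mem_univ, true_and] at hst ⊢; exact hst)]
  refine Finset.sum_congr rfl fun rs hrs => ?_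
  simp only [mem_filter, mem_univ, true_and] at hrs
  unfold content
  rw [← Finset.card_product]
  congr 1
  rw [Finset.filter_filter]
  rw [← Finset.filter_product]
  rw [← Finset.univ_product_univ]
  apply Finset.filter_congr
  intro st _
  constructor
  · rintro ⟨_, h⟩
    exact ⟨congrArg Prod.fst h, congrArg Prod.snd h⟩
  · rintro ⟨h1, h2⟩
    exact ⟨by rw [h1, h2]; exact hrs, by rw [h1, h2]⟩

lemma cardB {n k : ℕ} (w : Fin n → Fin k) :
    (univ.filter (fun st : Fin n × Fin n => w st.1 < w st.2)).card
      = (univ.filter (fun st : Fin n × Fin n => st.1 < st.2 ∧ w st.1 ≠ w st.2)).card := by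
  apply Finset.card_nbij'
    (i := fun st => if st.1 < st.2 then st else (st.2, st.1))
    (j := fun st => if w st.1 < w st.2 then st else (st.2, st.1))
  · intro st hst
    simp only [Finset.mem_coe, mem_filter, mem_univ, true_and] at hst ⊢
    split_ifs with h
    · exact ⟨h, hst.ne⟩
    · have : st.1 ≠ st.2 := fun he => absurd (he ▸ hst) (lt_irrefl _)
      exact ⟨lt_of_le_of_ne (not_lt.mp h) (Ne.symm this), hst.ne'⟩
  · intro st hst
    simp only [Finset.mem_coe, mem_filter, mem_univ, true_and] at hst ⊢
    split_ifs with h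
    · exact h
    · exact lt_of_le_of_ne (not_lt.mp h) (Ne.symm hst.2)
  · intro st hst
    simp only [Finset.mem_coe, mem_filter, mem_univ, true_and] at hst
    by_cases h : st.1 < st.2
    · simp [h, hst]
    · simp only [if_neg h]
      rw [if_neg (by simpa using le_of_lt hst)]
  · intro st hst
    simp only [Finset.mem_coe, mem_filter, mem_univ, true_and] at hst
    by_cases h : w st.1 < w st.2
    · simp [h, hst.1]
    · simp only [if_neg h]
      rw [if_neg (by simpa using le_of_lt hst.1)]

lemma split_card {n k : ℕ} (w : Fin n → Fin k) :
    (univ.filter (fun st : Fin n × Fin n => st.1 < st.2 ∧ w st.1 ≠ w st.2)).card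
      = inversions w + antiInv w := by
  unfold inversions antiInv
  rw [← Finset.card_union_of_disjoint]
  · congr 1
    rw [← Finset.filter_or]
    apply Finset.filter_congr
    intro st _
    constructor
    · rintro ⟨h1, h2⟩
      rcases lt_or_gt_of_ne h2 with h | h
      · exact Or.inr ⟨h1, h⟩
      · exact Or.inl ⟨h1, h⟩
    · rintro (⟨h1, h2⟩ | ⟨h1, h2⟩)
      · exact ⟨h1, h2.ne'⟩
      · exact ⟨h1, h2.ne⟩
  · rw [Finset.disjoint_filter]
    rintro st _ ⟨_, h2⟩ ⟨_, h4⟩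
    exact absurd h4 (not_lt.mpr (le_of_lt h2))

lemma inv_add_anti {n k : ℕ} (w : Fin n → Fin k) :
    inversions w + antiInv w
      = ∑ rs ∈ univ.filter (fun rs : Fin k × Fin k => rs.1 < rs.2),
          content w rs.1 * content w rs.2 := by
  rw [← split_card, ← cardB, cardA]

lemma inv_rev {n k : ℕ} (w : Fin n → Fin k) :
    inversions (w ∘ Fin.rev) = antiInv w := by
  unfold inversions antiInv
  apply Finset.card_nbij'
    (i := fun st => (st.2.rev, st.1.rev))
    (j := fun st => (st.2.rev, st.1.rev))
  · intro st hst
    simp only [Finset.mem_coe, mem_filter, mem_univ, true_and, Function.comp_apply] at hst ⊢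
    exact ⟨Fin.rev_lt_rev.mpr hst.1, hst.2⟩
  · intro st hst
    simp only [Finset.mem_coe, mem_filter, mem_univ, true_and, Function.comp_apply] at hst ⊢
    refine ⟨Fin.rev_lt_rev.mpr hst.1, ?_⟩
    simpa using hst.2
  · intro st _; simp
  · intro st _; simp

lemma content_comp_rev {n k : ℕ} (w : Fin n → Fin k) :
    content (w ∘ Fin.rev) = content w := by
  funext r
  exact Finset.card_nbij' Fin.rev Fin.rev (fun t ht => by simpa using ht)
    (fun t ht => by simpa using ht) (fun t _ => by simp) (fun t _ => by simp)

lemma exists_w0 {n k : ℕ} (y : Fin k → ℕ) (hn : n = ∑ r, y r) :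
    ∃ w0 : Fin n → Fin k, content w0 = y := by
  have hc : Fintype.card (Fin n) = Fintype.card (Σ r : Fin k, Fin (y r)) := by
    simp [hn]
  obtain ⟨e⟩ : Nonempty (Fin n ≃ Σ r : Fin k, Fin (y r)) :=
    ⟨Fintype.equivOfCardEq hc⟩
  refine ⟨fun t => (e t).1, ?_⟩
  funext r
  unfold content
  rw [← Fintype.card_subtype]
  have h2 : Fintype.card {t : Fin n // (e t).1 = r}
      = Fintype.card {p : Σ r' : Fin k, Fin (y r') // p.1 = r} :=
    Fintype.card_congr (e.subtypeEquiv (fun t => by simp))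
  rw [h2, Fintype.card_congr (Equiv.subtypeSigmaEquiv (fun r2 => Fin (y r2)) (fun x => x = r))]
  rw [Fintype.card_sigma]
  rw [Finset.sum_unique_nonempty _ _ Finset.univ_nonempty]
  rw [Fintype.card_fin]; exact congrArg y ((default : {x : Fin k // x = r}).2)

lemma exists_perm {n k : ℕ} (w w0 : Fin n → Fin k) (h : content w = content w0) :
    ∃ g : Equiv.Perm (Fin n), w0 ∘ g = w := by
  have hcard : ∀ r, Fintype.card {t // w t = r} = Fintype.card {t // w0 t = r} := by
    intro r
    rw [Fintype.card_subtype, Fintype.card_subtype]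
    exact congrFun h r
  have e : ∀ r, {t // w t = r} ≃ {t // w0 t = r} := fun r => Fintype.equivOfCardEq (hcard r)
  refine ⟨(Equiv.sigmaFiberEquiv w).symm.trans ((Equiv.sigmaCongrRight e).trans
    (Equiv.sigmaFiberEquiv w0)), ?_⟩
  funext t
  exact (e (w t) ⟨t, rfl⟩).prop

lemma card_words {n k : ℕ} (y : Fin k → ℕ) (hn : n = ∑ r, y r) :
    (univ.filter (fun w : Fin n → Fin k => content w = y)).card
      = Nat.multinomial univ y := by
  classical
  obtain ⟨w0, hw0⟩ := exists_w0 y hn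
  have hcomp : ∀ g : Equiv.Perm (Fin n), content (w0 ∘ g) = y := by
    intro g
    funext r
    show (univ.filter (fun t => w0 (g t) = r)).card = y r
    rw [content_comp_equiv w0 g r]
    exact congrFun hw0 r
  have key : (Finset.univ : Finset (Equiv.Perm (Fin n))).card
      = ∑ w ∈ univ.filter (fun w : Fin n → Fin k => content w = y),
          (univ.filter (fun g : Equiv.Perm (Fin n) => w0 ∘ g = w)).card := by
    apply Finset.card_eq_sum_card_fiberwise (f := fun g : Equiv.Perm (Fin n) => w0 ∘ g)
    intro g _
    simp only [Finset.mem_coe, mem_filter, mem_univ, true_and]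
    exact hcomp g
  have fib : ∀ w ∈ univ.filter (fun w : Fin n → Fin k => content w = y),
      (univ.filter (fun g : Equiv.Perm (Fin n) => w0 ∘ g = w)).card = ∏ r, (y r)! := by
    intro w hw
    simp only [mem_filter, mem_univ, true_and] at hw
    obtain ⟨g0, hg0⟩ := exists_perm w w0 (by rw [hw, hw0])
    have step1 : (univ.filter (fun g : Equiv.Perm (Fin n) => w0 ∘ g = w)).card
        = (univ.filter (fun g : Equiv.Perm (Fin n) => w0 ∘ g = w0)).card := by
      apply Finset.card_nbij' (i := fun g => g * g0⁻¹) (j := fun g => g * g0)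
      · intro g hg
        simp only [Finset.mem_coe, mem_filter, mem_univ, true_and] at hg ⊢
        funext t
        have := congrFun hg (g0⁻¹ t)
        simpa [← hg0] using this
      · intro g hg
        simp only [Finset.mem_coe, mem_filter, mem_univ, true_and] at hg ⊢
        funext t
        have := congrFun hg (g0 t)
        simp only [Function.comp_apply, Equiv.Perm.mul_apply] at this ⊢
        rw [this, ← hg0]; rfl
      · intro g _; simp [mul_assoc]
      · intro g _; simp [mul_assoc]
    rw [step1]
    have := DomMulAct.stabilizer_card w0
    rw [Fintype.card_subtype] at this
    rw [this]
    refine Finset.prod_congr rfl fun r _ => ?_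
    congr 1
    rw [Fintype.card_subtype]
    exact congrFun hw0 r
  rw [Finset.sum_congr rfl fib, Finset.sum_const, smul_eq_mul] at key
  have hspec := Nat.multinomial_spec Finset.univ y
  have hcardperm : (Finset.univ : Finset (Equiv.Perm (Fin n))).card = n ! := by
    rw [Finset.card_univ, Fintype.card_perm, Fintype.card_fin]
  have hpos : 0 < ∏ r, (y r)! := Finset.prod_pos fun r _ => Nat.factorial_pos _
  apply Nat.eq_of_mul_eq_mul_right hpos
  rw [key.symm, hcardperm]
  rw [hn, ← hspec, mul_comm]

end InvAux

open Finset InvAux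

/-- First moment of the inversion statistic over words with content `y`:
`∑_{i ≥ 0} i ⋅ inv(y; i) = (1/2) ⋅ (n!/(y_1!⋯y_k!)) ⋅ ∑_{1 ≤ r < s ≤ k} y_r y_s`. -/
theorem sum_i_mul_invCount (k : ℕ) (hk : 0 < k) (y : Fin k → ℕ) (n : ℕ)
    (hn : n = ∑ r, y r) :
    ∑ i ∈ Finset.range
        ((∑ rs ∈ Finset.univ.filter (fun rs : Fin k × Fin k => rs.1 < rs.2),
          y rs.1 * y rs.2) + 1),
      (i : ℚ) * invCount n k y i =
    (1 / 2 : ℚ) * (Nat.multinomial Finset.univ y : ℚ) *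
      ∑ rs ∈ Finset.univ.filter (fun rs : Fin k × Fin k => rs.1 < rs.2),
        (y rs.1 : ℚ) * y rs.2 := by
  classical
  set S : ℕ := ∑ rs ∈ Finset.univ.filter (fun rs : Fin k × Fin k => rs.1 < rs.2),
      y rs.1 * y rs.2 with hS
  set W : Finset (Fin n → Fin k) :=
      univ.filter (fun w : Fin n → Fin k => content w = y) with hW
  -- the crucial per-word identity
  have hIA : ∀ w ∈ W, inversions w + antiInv w = S := by
    intro w hw
    simp only [hW, mem_filter, mem_univ, true_and] at hw
    rw [inv_add_anti w, hS]
    exact Finset.sum_congr rfl fun rs _ => by rw [hw]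
  -- rewrite LHS as a sum over words
  have hcount : ∀ i, (invCount n k y i : ℚ)
      = ((W.filter (fun w => inversions w = i)).card : ℚ) := by
    intro i
    unfold invCount
    rw [hW, Finset.filter_filter]
  have hmaps : ∀ w ∈ W, inversions w ∈ Finset.range (S + 1) := by
    intro w hw
    rw [Finset.mem_range, Nat.lt_succ_iff, ← hIA w hw]
    exact Nat.le_add_right _ _
  have hL : ∑ i ∈ Finset.range (S + 1), (i : ℚ) * invCount n k y i
      = ∑ w ∈ W, (inversions w : ℚ) := by
    rw [← Finset.sum_fiberwise_of_maps_to hmaps (fun w => (inversions w : ℚ))]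
    refine Finset.sum_congr rfl fun i _ => ?_
    rw [hcount i]
    have hconst : ∑ w ∈ W.filter (fun w => inversions w = i), (inversions w : ℚ)
        = ∑ _w ∈ W.filter (fun w => inversions w = i), (i : ℚ) :=
      Finset.sum_congr rfl fun w hw => by rw [(Finset.mem_filter.mp hw).2]
    rw [hconst, Finset.sum_const, nsmul_eq_mul, mul_comm]
  -- symmetry: sum of inversions equals sum of anti-inversions
  have hsym : ∑ w ∈ W, inversions w = ∑ w ∈ W, antiInv w := by
    refine Finset.sum_nbij' (i := fun w => w ∘ Fin.rev) (j := fun w => w ∘ Fin.rev)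
      ?_ ?_ ?_ ?_ ?_
    · intro w hw
      simp only [hW, mem_filter, mem_univ, true_and] at hw ⊢
      rw [content_comp_rev, hw]
    · intro w hw
      simp only [hW, mem_filter, mem_univ, true_and] at hw ⊢
      rw [content_comp_rev, hw]
    · intro w _; funext t; simp [Function.comp, Fin.rev_rev]
    · intro w _; funext t; simp [Function.comp, Fin.rev_rev]
    · intro w hw
      have h2 : (w ∘ Fin.rev) ∘ Fin.rev = w := by
        funext t; simp [Function.comp, Fin.rev_rev]
      rw [← inv_rev (w ∘ Fin.rev), h2]
  -- totals in ℕ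
  have htot : (∑ w ∈ W, inversions w) + (∑ w ∈ W, antiInv w) = W.card * S := by
    rw [← Finset.sum_add_distrib, Finset.sum_congr rfl hIA, Finset.sum_const, smul_eq_mul]
  have h2T : 2 * ∑ w ∈ W, inversions w = W.card * S := by
    rw [two_mul]
    nth_rewrite 2 [hsym]
    exact htot
  have hM : W.card = Nat.multinomial Finset.univ y := card_words y hn
  have hSq : ∑ rs ∈ Finset.univ.filter (fun rs : Fin k × Fin k => rs.1 < rs.2),
      (y rs.1 : ℚ) * y rs.2 = (S : ℚ) := by
    rw [hS]
    push_cast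
    rfl
  rw [hL, hSq]
  have hcast : (∑ w ∈ W, (inversions w : ℚ)) = ((∑ w ∈ W, inversions w : ℕ) : ℚ) := by
    push_cast
    rfl
  rw [hcast]
  have := congrArg (fun m : ℕ => (m : ℚ)) h2T
  push_cast at this
  rw [hM] at this
  linarith
end

section
/- Let n, k be positive integers and let y : Fin k → ℕ satisfy ∑_r y_r = n. Then the average number of inversions over all words with content y equals (1/2) ∑_{1≤i<j≤k} y_i y_j; that is, ( ∑_{w with content y} inv(w) ) / #{w with content y} = (1/2) ∑_{1≤i<j≤k} y_i y_j. Equivalently, the conditional expectation of the inversion count I given Y = y in the multinomial experiment is (1/2) ∑_{1≤i<j≤k} y_i y_j. -/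
open Finset

lemma content_rev {n k : ℕ} (w : Fin n → Fin k) :
    content (fun t => w t.rev) = content w := by
  funext r
  exact Finset.card_bij' (fun t _ => t.rev) (fun t _ => t.rev)
    (by simp_all) (by simp_all) (by simp) (by simp)

lemma count_lt_pairs {n k : ℕ} (w : Fin n → Fin k) :
    (Finset.univ.filter (fun ab : Fin n × Fin n => w ab.1 < w ab.2)).card
      = ∑ rs ∈ Finset.univ.filter (fun rs : Fin k × Fin k => rs.1 < rs.2),
          content w rs.1 * content w rs.2 := by
  rw [Finset.card_eq_sum_card_fiberwise
    (f := fun ab : Fin n × Fin n => (w ab.1, w ab.2))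
    (t := Finset.univ.filter (fun rs : Fin k × Fin k => rs.1 < rs.2))
    (fun ab hab => by simpa using (Finset.mem_filter.mp hab).2)]
  refine Finset.sum_congr rfl fun rs hrs => ?_
  have hlt : rs.1 < rs.2 := by simpa using hrs
  have : ((Finset.univ.filter (fun ab : Fin n × Fin n => w ab.1 < w ab.2)).filter
      (fun ab => (w ab.1, w ab.2) = rs))
      = (Finset.univ.filter (fun t => w t = rs.1)) ×ˢ
        (Finset.univ.filter (fun t => w t = rs.2)) := by
    ext ab
    simp only [Finset.mem_filter, Finset.mem_product, Finset.mem_univ, true_and,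
      Prod.ext_iff]
    constructor
    · rintro ⟨_, h1, h2⟩; exact ⟨h1, h2⟩
    · rintro ⟨h1, h2⟩; exact ⟨by rw [h1, h2]; exact hlt, h1, h2⟩
  rw [this, Finset.card_product]
  rfl

lemma inv_add_inv_rev {n k : ℕ} (w : Fin n → Fin k) :
    inversions w + inversions (fun t => w t.rev)
      = (Finset.univ.filter (fun ab : Fin n × Fin n => w ab.1 < w ab.2)).card := by
  classical
  have hsplit := Finset.card_filter_add_card_filter_not
    (s := Finset.univ.filter (fun ab : Fin n × Fin n => w ab.1 < w ab.2))
    (p := fun ab => ab.1 < ab.2)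
  rw [Finset.filter_filter, Finset.filter_filter] at hsplit
  have h1 : (Finset.univ.filter
      (fun ab : Fin n × Fin n => w ab.1 < w ab.2 ∧ ab.1 < ab.2)).card
      = inversions (fun t => w t.rev) := by
    unfold inversions
    refine Finset.card_bij' (fun ab _ => (ab.2.rev, ab.1.rev))
      (fun st _ => (st.2.rev, st.1.rev)) ?_ ?_ (by simp [Prod.ext_iff])
      (by simp [Prod.ext_iff])
    · intro ab hab
      simp only [Finset.mem_filter, Finset.mem_univ, true_and] at hab ⊢
      exact ⟨by simpa [Fin.rev_lt_rev] using hab.2, by simpa using hab.1⟩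
    · intro st hst
      simp only [Finset.mem_filter, Finset.mem_univ, true_and] at hst ⊢
      exact ⟨by simpa using hst.2, by simpa [Fin.rev_lt_rev] using hst.1⟩
  have h2 : (Finset.univ.filter
      (fun ab : Fin n × Fin n => w ab.1 < w ab.2 ∧ ¬ ab.1 < ab.2)).card
      = inversions w := by
    unfold inversions
    refine Finset.card_bij' (fun ab _ => (ab.2, ab.1)) (fun st _ => (st.2, st.1))
      ?_ ?_ (by simp) (by simp)
    · intro ab hab
      simp only [Finset.mem_filter, Finset.mem_univ, true_and] at hab ⊢
      obtain ⟨hw, hnlt⟩ := hab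
      have hne : ab.1 ≠ ab.2 := fun h => absurd hw (by simp [h])
      exact ⟨lt_of_le_of_ne (not_lt.mp hnlt) (Ne.symm hne), hw⟩
    · intro st hst
      simp only [Finset.mem_filter, Finset.mem_univ, true_and] at hst ⊢
      exact ⟨hst.2, not_lt.mpr hst.1.le⟩
  omega

lemma exists_word {n k : ℕ} (y : Fin k → ℕ) (hy : ∑ r, y r = n) :
    ∃ w : Fin n → Fin k, content w = y := by
  classical
  set m : Multiset (Fin k) := ∑ r, Multiset.replicate (y r) r with hm
  have hcard : Multiset.card m = n := by simp [hm, hy]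
  have hcount : ∀ r, m.count r = y r := by
    intro r
    simp [hm, Multiset.count_sum', Multiset.count_replicate]
  set l := m.toList with hl
  have hlen : n = l.length := by simp [hl, hcard]
  refine ⟨fun t => l.get (Fin.cast hlen t), ?_⟩
  have hofn : List.ofFn (fun t : Fin n => l.get (Fin.cast hlen t)) = l := by
    subst hlen
    simp [List.ofFn_get]
  funext r
  have : content (fun t => l.get (Fin.cast hlen t)) r
      = Multiset.count r (Multiset.map (fun t : Fin n => l.get (Fin.cast hlen t))
          Finset.univ.val) := by
    simp only [content]
    rw [Finset.card_def, Finset.filter_val, Multiset.count_map]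
    congr 1
    exact Multiset.filter_congr (fun a _ => by simp [eq_comm])
  rw [this, Fin.univ_val_map, hofn]
  rw [show (l : Multiset (Fin k)) = m from by simp [hl], hcount]

/-- The average number of inversions over all words with content `y` (i.e. the
conditional expectation of the inversion count `I` given `Y = y`) equals
`(1/2) ∑_{1 ≤ i < j ≤ k} y_i y_j`. -/
theorem conditional_expectation_inversions (n k : ℕ) (hn : 0 < n) (hk : 0 < k)
    (y : Fin k → ℕ) (hy : ∑ r, y r = n) :
    (∑ w ∈ Finset.univ.filter (fun w : Fin n → Fin k => content w = y),
        (inversions w : ℚ)) /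
      ((Finset.univ.filter (fun w : Fin n → Fin k => content w = y)).card : ℚ) =
    (1 / 2 : ℚ) *
      ∑ rs ∈ Finset.univ.filter (fun rs : Fin k × Fin k => rs.1 < rs.2),
        (y rs.1 : ℚ) * y rs.2 := by

  classical
  set S := Finset.univ.filter (fun w : Fin n → Fin k => content w = y) with hS
  obtain ⟨w0, hw0⟩ := exists_word y hy
  have hSne : S.Nonempty := ⟨w0, by simp [hS, hw0]⟩
  set T : ℕ := ∑ rs ∈ Finset.univ.filter (fun rs : Fin k × Fin k => rs.1 < rs.2),
      y rs.1 * y rs.2 with hT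
  have hkey : ∀ w ∈ S, inversions w + inversions (fun t => w t.rev) = T := by
    intro w hw
    have hc : content w = y := (Finset.mem_filter.mp hw).2
    rw [inv_add_inv_rev, count_lt_pairs, hc]
  have hrevmem : ∀ w ∈ S, (fun t : Fin n => w t.rev) ∈ S := by
    intro w hw
    simp only [hS, Finset.mem_filter, Finset.mem_univ, true_and] at hw ⊢
    rw [content_rev, hw]
  have hsumrev : ∑ w ∈ S, inversions (fun t => w t.rev) = ∑ w ∈ S, inversions w := by
    refine Finset.sum_nbij' (fun w => fun t => w t.rev) (fun w => fun t => w t.rev)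
      hrevmem hrevmem ?_ ?_ (fun w _ => rfl)
    · intro w _; funext t; simp
    · intro w _; funext t; simp
  have htwo : 2 * ∑ w ∈ S, inversions w = S.card * T := by
    calc 2 * ∑ w ∈ S, inversions w
        = ∑ w ∈ S, inversions w + ∑ w ∈ S, inversions (fun t => w t.rev) := by
          rw [hsumrev]; ring
      _ = ∑ w ∈ S, (inversions w + inversions (fun t => w t.rev)) := by
          rw [Finset.sum_add_distrib]
      _ = ∑ w ∈ S, T := Finset.sum_congr rfl hkey
      _ = S.card * T := by rw [Finset.sum_const, smul_eq_mul]
  have hcard0 : (S.card : ℚ) ≠ 0 := by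
    exact_mod_cast Finset.card_ne_zero_of_mem hSne.choose_spec
  have hQ : ∑ w ∈ S, (inversions w : ℚ) = (S.card : ℚ) * T / 2 := by
    have := congrArg (fun x : ℕ => (x : ℚ)) htwo
    push_cast at this
    rw [← this]; ring
  rw [hQ]
  have hTQ : (T : ℚ) = ∑ rs ∈ Finset.univ.filter (fun rs : Fin k × Fin k => rs.1 < rs.2),
      (y rs.1 : ℚ) * y rs.2 := by
    rw [hT]; push_cast; rfl
  rw [← hTQ]
  field_simp
end
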